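/- arXiv:2012.03412 — 4 statements merged into one kernel-verified Lean document; each statement's English description precedes it below -/
import Mathlib

section
/- (Lagrange inversion, coefficient form) Let \phi(t) be a formal power series with nonzero constant term and G(t) any formal power series. Then G(t) = \sum_{n\ge 0} a_n (t/\phi(t))^n where a_0 = G(0) and for n \ge 1, a_n = (1/n) [t^{n-1}] (G'(t) \phi(t)^n). -/
open PowerSeries Finset
noncomputable section

/-- Coefficient-wise composition `f ∘ g` of formal power series; this agrees with the
usual composition when `g` has zero constant term. -/
def scomp (f g : PowerSeries ℂ) : PowerSeries ℂ :=
  PowerSeries.mk fun N => ∑ n ∈ Finset.range (N + 1),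
    (PowerSeries.coeff n f) * (PowerSeries.coeff N (g ^ n))

/-- The exponential series `∑ t^n/n!`. -/
def expS : PowerSeries ℂ := PowerSeries.mk fun n => 1 / (n.factorial : ℂ)

/-- The series `log(1+t) = ∑_{n≥1} (-1)^{n+1} t^n / n`. -/
def logS : PowerSeries ℂ := PowerSeries.mk fun n => if n = 0 then 0 else (-1) ^ (n + 1) / (n : ℂ)

/-- Complex power `φ^q := exp (q · log φ)`, well defined when `φ` has constant term 1. -/
def cpow (φ : PowerSeries ℂ) (q : ℂ) : PowerSeries ℂ :=
  scomp expS (q • scomp logS (φ - 1))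

/-- Formal derivative. -/
def D (f : PowerSeries ℂ) : PowerSeries ℂ :=
  PowerSeries.mk fun n => ((n + 1 : ℕ) : ℂ) * PowerSeries.coeff (n + 1) f

/-- Generalized binomial coefficient `binom(t, k) = t(t-1)⋯(t-k+1)/k!`. -/
def gbinom (t : ℂ) (k : ℕ) : ℂ := (∏ j ∈ Finset.range k, (t - j)) / (k.factorial : ℂ)

/-- The ordinary Bell polynomial `B_{n,k}(x_1, …, x_{n-k+1})`. -/
def ordBell (n k : ℕ) (x : ℕ → ℂ) : ℂ :=
  ∑ i : Fin (n - k + 1) → Fin (n + 1),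
    if (∑ j, (i j : ℕ)) = k ∧ (∑ j, (j.1 + 1) * (i j : ℕ)) = n then
      ((k.factorial : ℂ) / ∏ j, ((i j : ℕ).factorial : ℂ)) * ∏ j, x (j.1 + 1) ^ (i j : ℕ)
    else 0


/- ---------- auxiliary lemmas ---------- -/

lemma coeff_D (f : PowerSeries ℂ) (n : ℕ) :
    PowerSeries.coeff n (D f) = ((n + 1 : ℕ) : ℂ) * PowerSeries.coeff (n + 1) f :=
  PowerSeries.coeff_mk _ _

lemma D_eq (f : PowerSeries ℂ) : D f = PowerSeries.derivativeFun f := by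
  ext n; rw [coeff_D, show PowerSeries.derivativeFun f = PowerSeries.derivative ℂ f from rfl,
    PowerSeries.coeff_derivative, mul_comm]; push_cast; ring

lemma D_mul (f g : PowerSeries ℂ) : D (f * g) = f * D g + g * D f := by
  simp [D_eq, PowerSeries.derivativeFun_mul, smul_eq_mul]

lemma D_one : D 1 = 0 := by simp [D_eq, PowerSeries.derivativeFun_one]

lemma D_X : D PowerSeries.X = 1 := by
  ext n
  rw [coeff_D, PowerSeries.coeff_X, PowerSeries.coeff_one]
  rcases n with _ | n <;> simp

lemma D_C (r : ℂ) : D (PowerSeries.C r) = 0 := by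
  simp [D_eq, show (PowerSeries.C r).derivativeFun = PowerSeries.derivative ℂ (PowerSeries.C r) from rfl,
    PowerSeries.derivative_C]

lemma D_sum {s : Finset ℕ} (f : ℕ → PowerSeries ℂ) :
    D (∑ i ∈ s, f i) = ∑ i ∈ s, D (f i) := by
  simp only [D_eq]
  induction s using Finset.induction with
  | empty => simp [show PowerSeries.derivativeFun (0 : PowerSeries ℂ) = 0 by
      simpa using PowerSeries.derivativeFun_smul (0 : ℂ) (0 : PowerSeries ℂ)]
  | insert _ _ h ih => simp [Finset.sum_insert h, PowerSeries.derivativeFun_add, ih]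

lemma D_pow (f : PowerSeries ℂ) (n : ℕ) :
    D (f ^ (n + 1)) = ((n + 1 : ℕ) : ℂ) • (f ^ n * D f) := by
  induction n with
  | zero => simp
  | succ n ih =>
    have h2 : f ^ (n + 2) = f * f ^ (n + 1) := by ring
    rw [h2, D_mul, ih, PowerSeries.smul_eq_C_mul, PowerSeries.smul_eq_C_mul]
    push_cast [map_add, map_one]
    ring

lemma u_mul_phi {φ : PowerSeries ℂ} (hφ : PowerSeries.constantCoeff φ ≠ 0) :
    (PowerSeries.X * φ⁻¹) * φ = PowerSeries.X := by
  rw [mul_assoc, PowerSeries.inv_mul_cancel φ hφ, mul_one]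

lemma coeff_u_pow (φ : PowerSeries ℂ) (n N : ℕ) :
    PowerSeries.coeff N ((PowerSeries.X * φ⁻¹) ^ n) =
      if n ≤ N then PowerSeries.coeff (N - n) ((φ⁻¹ : PowerSeries ℂ) ^ n) else 0 := by
  rw [mul_pow, PowerSeries.coeff_X_pow_mul']

lemma coeff_u_pow_zero {φ : PowerSeries ℂ} {n N : ℕ} (h : N < n) :
    PowerSeries.coeff N ((PowerSeries.X * φ⁻¹) ^ n) = 0 := by
  rw [coeff_u_pow, if_neg (by omega)]

lemma coeff_u_diag {φ : PowerSeries ℂ} (hφ : PowerSeries.constantCoeff φ ≠ 0) (N : ℕ) :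
    PowerSeries.coeff N ((PowerSeries.X * φ⁻¹) ^ N) ≠ 0 := by
  rw [coeff_u_pow, if_pos le_rfl, Nat.sub_self, PowerSeries.coeff_zero_eq_constantCoeff,
    map_pow, PowerSeries.constantCoeff_inv]
  exact pow_ne_zero _ (inv_ne_zero hφ)

lemma deriv_rel {φ : PowerSeries ℂ} (hφ : PowerSeries.constantCoeff φ ≠ 0) :
    (PowerSeries.X * φ⁻¹) * D φ + φ * D (PowerSeries.X * φ⁻¹) = 1 := by
  have := congrArg D (u_mul_phi hφ)
  rwa [D_mul, D_X] at this

lemma resid {φ : PowerSeries ℂ} (hφ : PowerSeries.constantCoeff φ ≠ 0) (m : ℕ) :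
    PowerSeries.coeff m (D (PowerSeries.X * φ⁻¹) * φ ^ (m + 1)) =
      if m = 0 then 1 else 0 := by
  set u := PowerSeries.X * φ⁻¹ with hu
  have hd := deriv_rel hφ
  rcases m with _ | m
  · have h0 : PowerSeries.constantCoeff u = 0 := by simp [hu]
    have h1 := congrArg (PowerSeries.constantCoeff) hd
    simp only [map_add, map_mul, map_one, h0, PowerSeries.constantCoeff_X, zero_mul, zero_add] at h1
    rw [if_pos rfl, pow_one, PowerSeries.coeff_zero_eq_constantCoeff, map_mul, mul_comm]
    exact h1
  · have hphiDu : φ * D u = 1 - u * D φ := by linear_combination hd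
    have h1 : D u * φ ^ (m + 2) = φ ^ (m + 1) - PowerSeries.X * (D φ * φ ^ m) := by
      calc D u * φ ^ (m + 2) = (φ * D u) * φ ^ (m + 1) := by ring
        _ = (1 - u * D φ) * φ ^ (m + 1) := by rw [hphiDu]
        _ = φ ^ (m + 1) - (u * φ) * (D φ * φ ^ m) := by ring
        _ = φ ^ (m + 1) - PowerSeries.X * (D φ * φ ^ m) := by rw [u_mul_phi hφ]
    rw [h1, map_sub, PowerSeries.coeff_succ_X_mul]
    have h2 : PowerSeries.coeff m (D (φ ^ (m + 1))) =
        ((m + 1 : ℕ) : ℂ) * PowerSeries.coeff m (φ ^ m * D φ) := by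
      rw [D_pow, map_smul, smul_eq_mul]
    rw [coeff_D] at h2
    have hm1 : ((m + 1 : ℕ) : ℂ) ≠ 0 := Nat.cast_ne_zero.mpr (Nat.succ_ne_zero m)
    have h3 : PowerSeries.coeff (m + 1) (φ ^ (m + 1)) =
        PowerSeries.coeff m (D φ * φ ^ m) := by
      have := mul_left_cancel₀ hm1 h2
      rwa [mul_comm (φ ^ m)] at this
    rw [h3]; simp

lemma C4 {φ : PowerSeries ℂ} (hφ : PowerSeries.constantCoeff φ ≠ 0) (n' j : ℕ) :
    PowerSeries.coeff (n' + j)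
        (D ((PowerSeries.X * φ⁻¹) ^ (n' + 1)) * φ ^ (n' + 1 + j)) =
      if j = 0 then ((n' + 1 : ℕ) : ℂ) else 0 := by
  set u := PowerSeries.X * φ⁻¹ with hu
  have hXn : u ^ n' * φ ^ n' = PowerSeries.X ^ n' := by
    rw [← mul_pow, u_mul_phi hφ]
  have key : D (u ^ (n' + 1)) * φ ^ (n' + 1 + j) =
      ((n' + 1 : ℕ) : ℂ) • (PowerSeries.X ^ n' * (D u * φ ^ (j + 1))) := by
    rw [D_pow, PowerSeries.smul_eq_C_mul, PowerSeries.smul_eq_C_mul, ← hXn,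
      show n' + 1 + j = n' + (j + 1) by omega, pow_add]
    ring
  rw [key, map_smul, smul_eq_mul]
  rw [show n' + j = j + n' by omega, PowerSeries.coeff_X_pow_mul, resid hφ]
  by_cases h : j = 0 <;> simp [h, mul_comm]

/-- Triangular solve: coefficients of `G` in the basis `(X·φ⁻¹)^n`. -/
noncomputable def bfun (φ G : PowerSeries ℂ) : ℕ → ℂ
  | N => (PowerSeries.coeff N G - ∑ n ∈ (Finset.range N).attach,
      bfun φ G n.1 * PowerSeries.coeff N ((PowerSeries.X * φ⁻¹) ^ n.1)) /
      PowerSeries.coeff N ((PowerSeries.X * φ⁻¹) ^ N)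
  decreasing_by exact Finset.mem_range.mp n.2

lemma bfun_spec (φ G : PowerSeries ℂ) (N : ℕ) :
    bfun φ G N = (PowerSeries.coeff N G - ∑ n ∈ Finset.range N,
      bfun φ G n * PowerSeries.coeff N ((PowerSeries.X * φ⁻¹) ^ n)) /
      PowerSeries.coeff N ((PowerSeries.X * φ⁻¹) ^ N) := by
  rw [bfun, ← Finset.sum_attach (Finset.range N)
    (fun n => bfun φ G n * PowerSeries.coeff N ((PowerSeries.X * φ⁻¹) ^ n))]

/-- The Lagrange inversion formula in coefficient form:
`G(t) = ∑_{n≥0} a_n (t/φ(t))^n` with `a_0 = G(0)` and `a_n = (1/n)[t^{n-1}](G'(t) φ(t)^n)`. -/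
theorem stmt2 (φ G : PowerSeries ℂ) (hφ : PowerSeries.constantCoeff φ ≠ 0)
    (a : ℕ → ℂ) (ha0 : a 0 = PowerSeries.constantCoeff G)
    (ha : ∀ n : ℕ, 1 ≤ n →
      a n = (1 / (n : ℂ)) * PowerSeries.coeff (n - 1) (D G * φ ^ n)) :
    ∀ N : ℕ, PowerSeries.coeff N G =
      ∑ n ∈ Finset.range (N + 1),
        a n * PowerSeries.coeff N ((PowerSeries.X * φ⁻¹) ^ n) := by
  set u := PowerSeries.X * φ⁻¹ with hu
  set b := bfun φ G with hb
  have hG : ∀ N : ℕ, PowerSeries.coeff N G =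
      ∑ n ∈ Finset.range (N + 1), b n * PowerSeries.coeff N (u ^ n) := by
    intro N
    have hd := coeff_u_diag hφ N
    rw [Finset.sum_range_succ, hb, bfun_spec, ← hu, div_mul_cancel₀ _ hd]
    ring
  have hab : ∀ n : ℕ, a n = b n := by
    intro n
    rcases n with _ | k
    · have h0 := hG 0
      rw [Finset.sum_range_one, pow_zero, PowerSeries.coeff_one] at h0
      simp at h0
      rw [ha0]
      exact h0
    · -- main case : k + 1
      have key : PowerSeries.coeff k (D G * φ ^ (k + 1)) =
          ((k + 1 : ℕ) : ℂ) * b (k + 1) := by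
        set Gk : PowerSeries ℂ :=
          ∑ n ∈ Finset.range (k + 2), PowerSeries.C (b n) * u ^ n with hGk
        have step1 : ∀ j : ℕ, j ≤ k + 1 →
            PowerSeries.coeff j Gk = PowerSeries.coeff j G := by
          intro j hj
          rw [hGk, map_sum]
          simp only [PowerSeries.coeff_C_mul]
          rw [← Finset.sum_subset
              (Finset.range_subset_range.mpr (by omega) : Finset.range (j + 1) ⊆ Finset.range (k + 2))
              (fun x hx hnx => by
                have hxj : j < x := by
                  simp only [Finset.mem_range] at hx hnx; omega
                rw [hu, coeff_u_pow_zero hxj, mul_zero])]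
          exact (hG j).symm
        have step2 : PowerSeries.coeff k (D G * φ ^ (k + 1)) =
            PowerSeries.coeff k (D Gk * φ ^ (k + 1)) := by
          rw [PowerSeries.coeff_mul, PowerSeries.coeff_mul]
          refine Finset.sum_congr rfl fun p hp => ?_
          rw [Finset.HasAntidiagonal.mem_antidiagonal] at hp
          rw [coeff_D, coeff_D, step1 (p.1 + 1) (by omega)]
        have hDGk : D Gk = ∑ n ∈ Finset.range (k + 2),
            PowerSeries.C (b n) * D (u ^ n) := by
          rw [hGk, D_sum]
          refine Finset.sum_congr rfl fun n _ => ?_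
          rw [D_mul, D_C, mul_zero, add_zero]
        rw [step2, hDGk, Finset.sum_mul, map_sum]
        have hmem : k + 1 ∈ Finset.range (k + 2) := Finset.mem_range.mpr (by omega)
        rw [Finset.sum_eq_single_of_mem (k + 1) hmem (fun n hn hne => ?_)]
        · have h := C4 hφ k 0
          rw [add_zero, add_zero, if_pos rfl, ← hu] at h
          rw [mul_assoc, PowerSeries.coeff_C_mul, h]
          ring
        · rcases n with _ | n'
          · rw [pow_zero, D_one]; simp
          · have h := C4 hφ n' (k - n')
            have hn'k : n' + 1 ≤ k := by
              rw [Finset.mem_range] at hn; omega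
            rw [show n' + (k - n') = k by omega, show n' + 1 + (k - n') = k + 1 by omega,
              ← hu] at h
            rw [mul_assoc, PowerSeries.coeff_C_mul, h, if_neg (by omega), mul_zero]
      have hk1 : ((k + 1 : ℕ) : ℂ) ≠ 0 := Nat.cast_ne_zero.mpr (Nat.succ_ne_zero k)
      rw [ha (k + 1) (by omega), show k + 1 - 1 = k from rfl, key, one_div]
      exact inv_mul_cancel_left₀ hk1 _
  intro N
  rw [hG N]
  exact Finset.sum_congr rfl fun n _ => by rw [hab n]
end
end

section
/- With \lambda_n(s) defined by w(t)^s = \sum_{n\ge 0} \lambda_n(s) F(t)^n as above, for any complex a \ne 0 and b with a+b arbitrary: a \cdot n \cdot \lambda_n(a+b) = (a+b) \sum_{k=0}^n k \lambda_k(a) \lambda_{n-k}(b) for all n \ge 0. -/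
open PowerSeries Finset
noncomputable section

section ScompLemmas

private lemma coeff_scomp (f g : PowerSeries ℂ) (N : ℕ) :
    PowerSeries.coeff N (scomp f g)
      = ∑ n ∈ range (N+1), PowerSeries.coeff n f * PowerSeries.coeff N (g^n) :=
  PowerSeries.coeff_mk _ _

private lemma coeff_pow_zero {g : PowerSeries ℂ} (hg : PowerSeries.constantCoeff g = 0)
    {n N : ℕ} (h : N < n) : PowerSeries.coeff N (g^n) = 0 := by
  have hd : (X : ℂ⟦X⟧)^n ∣ g^n := pow_dvd_pow_of_dvd (X_dvd_iff.mpr hg) n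
  exact (X_pow_dvd_iff.mp hd) N h

private lemma coeff_pow_self {g : PowerSeries ℂ} (hg : PowerSeries.constantCoeff g = 0)
    (n : ℕ) : PowerSeries.coeff n (g^n) = (PowerSeries.coeff 1 g)^n := by
  induction n with
  | zero => simp
  | succ n ih =>
    rw [pow_succ, coeff_mul, Finset.Nat.sum_antidiagonal_eq_sum_range_succ_mk]
    rw [Finset.sum_eq_single n]
    · have h1 : n+1-n = 1 := by omega
      rw [h1, ih, pow_succ]
    · intro b hb hbn
      rcases lt_or_gt_of_ne hbn with h | h
      · rw [coeff_pow_zero hg h, zero_mul]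
      · have h0 : n+1-b = 0 := by omega
        rw [h0, coeff_zero_eq_constantCoeff, hg, mul_zero]
    · intro h; exact absurd (mem_range.mpr (by omega)) h

private lemma coeff_scomp_ext {g : PowerSeries ℂ} (hg : PowerSeries.constantCoeff g = 0)
    (f : PowerSeries ℂ) {N M : ℕ} (h : N < M) :
    PowerSeries.coeff N (scomp f g)
      = ∑ n ∈ range M, PowerSeries.coeff n f * PowerSeries.coeff N (g^n) := by
  rw [coeff_scomp]
  apply Finset.sum_subset (Finset.range_subset_range.mpr h)
  intro x hx hx'
  rw [coeff_pow_zero hg (by simp only [mem_range] at hx hx' ⊢; omega), mul_zero]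

private lemma tri (N : ℕ) (A : ℕ × ℕ → ℂ) (hA : ∀ p : ℕ × ℕ, N < p.1 + p.2 → A p = 0) :
    ∑ n ∈ range (N+1), ∑ p ∈ Finset.HasAntidiagonal.antidiagonal n, A p
      = ∑ i ∈ range (N+1), ∑ j ∈ range (N+1), A (i, j) := by
  have h2 : ∑ i ∈ range (N+1), ∑ j ∈ range (N+1), A (i, j)
      = ∑ p ∈ (range (N+1) ×ˢ range (N+1)).filter (fun p => p.1 + p.2 ≤ N), A p := by
    rw [← Finset.sum_product']
    exact (Finset.sum_filter_of_ne (fun p _ hp => by by_contra hc; exact hp (hA p (by omega)))).symm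
  rw [h2, Finset.sum_sigma']
  apply Finset.sum_nbij' (fun x => x.2) (fun p => ⟨p.1 + p.2, p⟩)
  · rintro ⟨n, p⟩ hm
    simp only [Finset.mem_sigma, Finset.mem_range, Finset.HasAntidiagonal.mem_antidiagonal] at hm
    simp only [Finset.mem_filter, Finset.mem_product, Finset.mem_range]
    omega
  · intro p hp
    simp only [Finset.mem_filter, Finset.mem_product, Finset.mem_range] at hp
    simp only [Finset.mem_sigma, Finset.mem_range, Finset.HasAntidiagonal.mem_antidiagonal]
    exact ⟨by omega, trivial⟩
  · rintro ⟨n, p⟩ hm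
    simp only [Finset.mem_sigma, Finset.mem_range, Finset.HasAntidiagonal.mem_antidiagonal] at hm
    simp [hm.2]
  · intro p hp; rfl
  · intro x hx; rfl

private lemma scomp_mul {g : PowerSeries ℂ} (hg : PowerSeries.constantCoeff g = 0)
    (f h : PowerSeries ℂ) : scomp (f * h) g = scomp f g * scomp h g := by
  ext N
  rw [coeff_mul, coeff_scomp]
  have hrw : ∀ p ∈ Finset.HasAntidiagonal.antidiagonal N,
      PowerSeries.coeff p.1 (scomp f g) * PowerSeries.coeff p.2 (scomp h g)
      = ∑ i ∈ range (N+1), ∑ j ∈ range (N+1),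
          PowerSeries.coeff i f * PowerSeries.coeff j h
            * (PowerSeries.coeff p.1 (g^i) * PowerSeries.coeff p.2 (g^j)) := by
    intro p hp
    rw [Finset.HasAntidiagonal.mem_antidiagonal] at hp
    rw [coeff_scomp_ext hg f (show p.1 < N+1 by omega),
        coeff_scomp_ext hg h (show p.2 < N+1 by omega), Finset.sum_mul_sum]
    exact Finset.sum_congr rfl fun i _ => Finset.sum_congr rfl fun j _ => by ring
  rw [Finset.sum_congr rfl hrw]
  rw [Finset.sum_comm]
  have hrw2 : ∀ i ∈ range (N+1),
      ∑ p ∈ Finset.HasAntidiagonal.antidiagonal N, ∑ j ∈ range (N+1),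
        PowerSeries.coeff i f * PowerSeries.coeff j h
          * (PowerSeries.coeff p.1 (g^i) * PowerSeries.coeff p.2 (g^j))
      = ∑ j ∈ range (N+1), PowerSeries.coeff i f * PowerSeries.coeff j h
          * PowerSeries.coeff N (g^(i+j)) := by
    intro i _
    rw [Finset.sum_comm]
    refine Finset.sum_congr rfl fun j _ => ?_
    rw [← Finset.mul_sum, ← coeff_mul, ← pow_add]
  rw [Finset.sum_congr rfl hrw2]
  have hlhs : ∀ n ∈ range (N+1), PowerSeries.coeff n (f * h) * PowerSeries.coeff N (g^n)
      = ∑ p ∈ Finset.HasAntidiagonal.antidiagonal n, PowerSeries.coeff p.1 f * PowerSeries.coeff p.2 h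
          * PowerSeries.coeff N (g^(p.1+p.2)) := by
    intro n hn
    rw [coeff_mul, Finset.sum_mul]
    exact Finset.sum_congr rfl fun p hp => by
      rw [Finset.HasAntidiagonal.mem_antidiagonal] at hp; rw [hp]
  rw [Finset.sum_congr rfl hlhs,
    tri N (fun p => PowerSeries.coeff p.1 f * PowerSeries.coeff p.2 h
        * PowerSeries.coeff N (g^(p.1+p.2)))
      (fun p hp => by rw [coeff_pow_zero hg hp, mul_zero])]

private lemma scomp_one (g : PowerSeries ℂ) : scomp 1 g = 1 := by
  ext N
  rw [coeff_scomp, Finset.sum_eq_single 0]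
  · simp
  · intro b _ hb
    rw [coeff_one, if_neg hb, zero_mul]
  · intro hb; exact absurd (mem_range.mpr (by omega)) hb

private lemma scomp_smul (g : PowerSeries ℂ) (c : ℂ) (f : PowerSeries ℂ) :
    scomp (c • f) g = c • scomp f g := by
  ext N
  simp [coeff_scomp, Finset.mul_sum, mul_assoc]

private lemma coeff0_scomp (f g : PowerSeries ℂ) :
    PowerSeries.constantCoeff (scomp f g) = PowerSeries.coeff 0 f := by
  rw [← coeff_zero_eq_constantCoeff, coeff_scomp]
  simp

private lemma scomp_one_add_X {g : PowerSeries ℂ} (hg : PowerSeries.constantCoeff g = 0) :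
    scomp (1 + X) g = 1 + g := by
  ext N
  rw [coeff_scomp]
  have h0 : ∀ n ∈ range (N+1), PowerSeries.coeff n (1 + X) * PowerSeries.coeff N (g^n)
      = PowerSeries.coeff n 1 * PowerSeries.coeff N (g^n)
        + PowerSeries.coeff n X * PowerSeries.coeff N (g^n) := by
    intro n _; rw [map_add, add_mul]
  rw [Finset.sum_congr rfl h0, Finset.sum_add_distrib, map_add]
  congr 1
  · rw [Finset.sum_eq_single 0]
    · simp
    · intro b _ hb; rw [coeff_one, if_neg hb, zero_mul]
    · intro hb; exact absurd (mem_range.mpr (by omega)) hb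
  · rw [Finset.sum_eq_single 1]
    · simp
    · intro b _ hb; rw [coeff_X, if_neg hb, zero_mul]
    · intro hb
      have hN : N = 0 := by simp only [mem_range] at hb; omega
      rw [coeff_X, if_pos rfl, one_mul, hN, pow_one, coeff_zero_eq_constantCoeff, hg]

private lemma derivative_scomp {g : PowerSeries ℂ} (hg : PowerSeries.constantCoeff g = 0)
    (f : PowerSeries ℂ) :
    d⁄dX ℂ (scomp f g) = scomp (d⁄dX ℂ f) g * d⁄dX ℂ g := by
  ext N
  rw [coeff_derivative, coeff_scomp_ext hg f (show N+1 < N+2 by omega), Finset.sum_mul]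
  have h1 : ∀ n ∈ range (N+2),
      PowerSeries.coeff n f * PowerSeries.coeff (N+1) (g^n) * ((N:ℂ)+1)
      = PowerSeries.coeff n f * ((n:ℂ) * PowerSeries.coeff N (g^(n-1) * d⁄dX ℂ g)) := by
    intro n _
    have hD : PowerSeries.coeff (N+1) (g^n) * ((N:ℂ)+1)
        = PowerSeries.coeff N (d⁄dX ℂ (g^n)) := by
      rw [coeff_derivative]
    rw [mul_assoc, hD, Derivation.leibniz_pow _ g n, map_nsmul, smul_eq_mul, nsmul_eq_mul]
  rw [Finset.sum_congr rfl h1, Finset.sum_range_succ']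
  have h2 : PowerSeries.coeff N (scomp (d⁄dX ℂ f) g * d⁄dX ℂ g)
      = ∑ k ∈ range (N+1), PowerSeries.coeff (k+1) f * ((k:ℂ)+1)
          * PowerSeries.coeff N (g^k * d⁄dX ℂ g) := by
    rw [coeff_mul]
    have h3 : ∀ p ∈ Finset.HasAntidiagonal.antidiagonal N,
        PowerSeries.coeff p.1 (scomp (d⁄dX ℂ f) g) * PowerSeries.coeff p.2 (d⁄dX ℂ g)
        = ∑ k ∈ range (N+1), PowerSeries.coeff (k+1) f * ((k:ℂ)+1)
            * (PowerSeries.coeff p.1 (g^k) * PowerSeries.coeff p.2 (d⁄dX ℂ g)) := by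
      intro p hp
      rw [Finset.HasAntidiagonal.mem_antidiagonal] at hp
      rw [coeff_scomp_ext hg _ (show p.1 < N+1 by omega), Finset.sum_mul]
      refine Finset.sum_congr rfl fun k _ => ?_
      rw [coeff_derivative]
      ring
    rw [Finset.sum_congr rfl h3, Finset.sum_comm]
    refine Finset.sum_congr rfl fun k _ => ?_
    rw [← Finset.mul_sum, ← coeff_mul]
  rw [h2]
  simp only [Nat.cast_zero, zero_mul, mul_zero, add_zero, Nat.cast_add, Nat.cast_one,
    Nat.add_sub_cancel]
  refine Finset.sum_congr rfl fun i _ => ?_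
  ring

private lemma scomp_inj {g : PowerSeries ℂ} (hg : PowerSeries.constantCoeff g = 0)
    (hg1 : PowerSeries.coeff 1 g ≠ 0)
    {f h : PowerSeries ℂ} (H : scomp f g = scomp h g) : f = h := by
  ext N
  induction N using Nat.strong_induction_on with
  | _ N ih =>
    have hN := congrArg (PowerSeries.coeff N) H
    rw [coeff_scomp, coeff_scomp, Finset.sum_range_succ, Finset.sum_range_succ] at hN
    have heq : ∀ n ∈ range N, PowerSeries.coeff n f * PowerSeries.coeff N (g^n)
        = PowerSeries.coeff n h * PowerSeries.coeff N (g^n) := fun n hn => by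
      rw [ih n (mem_range.mp hn)]
    rw [Finset.sum_congr rfl heq] at hN
    have hc := add_left_cancel hN
    have hgn : PowerSeries.coeff N (g^N) ≠ 0 := by
      rw [coeff_pow_self hg]; exact pow_ne_zero _ hg1
    exact mul_right_cancel₀ hgn hc

private lemma ode_uniq {y z : PowerSeries ℂ} (h : d⁄dX ℂ y * z = d⁄dX ℂ z * y)
    (h0y : PowerSeries.coeff 0 y = 1) (h0z : PowerSeries.coeff 0 z = 1) : y = z := by
  ext N
  induction N using Nat.strong_induction_on with
  | _ N ih =>
    match N with
    | 0 => rw [h0y, h0z]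
    | n+1 =>
      have hn := congrArg (PowerSeries.coeff n) h
      rw [coeff_mul, coeff_mul, Finset.Nat.sum_antidiagonal_eq_sum_range_succ_mk,
        Finset.Nat.sum_antidiagonal_eq_sum_range_succ_mk, Finset.sum_range_succ,
        Finset.sum_range_succ] at hn
      have heq : ∀ k ∈ range n, PowerSeries.coeff k (d⁄dX ℂ y) * PowerSeries.coeff (n-k) z
          = PowerSeries.coeff k (d⁄dX ℂ z) * PowerSeries.coeff (n-k) y := by
        intro k hk
        rw [mem_range] at hk
        rw [coeff_derivative, coeff_derivative, ih (k+1) (by omega), ih (n-k) (by omega)]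
      rw [Finset.sum_congr rfl heq] at hn
      have hc := add_left_cancel hn
      rw [Nat.sub_self, h0y, h0z, coeff_derivative, coeff_derivative, mul_one, mul_one] at hc
      have hne : ((n:ℂ)+1) ≠ 0 := by
        have h' : ((n+1 : ℕ) : ℂ) ≠ 0 := Nat.cast_ne_zero.mpr (by omega)
        push_cast at h'; exact h'
      exact mul_right_cancel₀ hne hc

private lemma deriv_expS : d⁄dX ℂ expS = expS := by
  ext n
  rw [coeff_derivative, expS, coeff_mk, coeff_mk, Nat.factorial_succ]
  have h1 : ((n+1 : ℕ) : ℂ) ≠ 0 := Nat.cast_ne_zero.mpr (by omega)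
  have h2 : ((n.factorial : ℕ) : ℂ) ≠ 0 := Nat.cast_ne_zero.mpr n.factorial_ne_zero
  push_cast at h1 h2 ⊢
  field_simp

private def Gs : PowerSeries ℂ := PowerSeries.mk fun n => (-1 : ℂ)^n

private lemma deriv_logS : d⁄dX ℂ logS = Gs := by
  ext n
  rw [coeff_derivative, logS, coeff_mk, Gs, coeff_mk, if_neg (by omega : ¬ n+1 = 0)]
  have h1 : ((n+1 : ℕ) : ℂ) ≠ 0 := Nat.cast_ne_zero.mpr (by omega)
  push_cast
  push_cast at h1
  field_simp
  ring

private lemma one_add_X_mul_Gs : (1 + X) * Gs = 1 := by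
  ext n
  rw [add_mul, one_mul, map_add]
  match n with
  | 0 => simp [Gs]
  | n+1 =>
    rw [coeff_succ_X_mul, Gs, coeff_mk, coeff_mk, coeff_one, if_neg (by omega : ¬ n+1 = 0)]
    rw [pow_succ]
    ring

private lemma cpow_coeff0 (w : PowerSeries ℂ) (s : ℂ) :
    PowerSeries.coeff 0 (cpow w s) = 1 := by
  rw [cpow, coeff_zero_eq_constantCoeff, coeff0_scomp, expS, coeff_mk]
  simp

private lemma cpow_ode (w : PowerSeries ℂ) (hw : PowerSeries.constantCoeff w = 1) (s : ℂ) :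
    w * d⁄dX ℂ (cpow w s) = C s * (d⁄dX ℂ w * cpow w s) := by
  have hw1 : PowerSeries.constantCoeff (w - 1) = 0 := by rw [map_sub, hw, map_one, sub_self]
  have hL0 : PowerSeries.constantCoeff (scomp logS (w - 1)) = 0 := by
    rw [coeff0_scomp, logS, coeff_mk]; simp
  have hsL0 : PowerSeries.constantCoeff (s • scomp logS (w - 1)) = 0 := by
    rw [smul_eq_C_mul, map_mul, constantCoeff_C, hL0, mul_zero]
  have hDL : d⁄dX ℂ (scomp logS (w - 1)) = scomp Gs (w-1) * d⁄dX ℂ w := by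
    rw [derivative_scomp hw1, deriv_logS]
    congr 1
    rw [map_sub, Derivation.map_one_eq_zero, sub_zero]
  have hwG : w * scomp Gs (w-1) = 1 := by
    have hkey : scomp (1+X) (w-1) * scomp Gs (w-1) = 1 := by
      rw [← scomp_mul hw1, one_add_X_mul_Gs, scomp_one]
    rw [scomp_one_add_X hw1, show (1 + (w-1) : ℂ⟦X⟧) = w by ring] at hkey
    exact hkey
  rw [cpow, derivative_scomp hsL0 expS, deriv_expS, Derivation.map_smul, hDL, smul_eq_C_mul (scomp Gs (w - 1) * d⁄dX ℂ w) s]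
  linear_combination (C s * scomp expS (s • scomp logS (w - 1)) * d⁄dX ℂ w) * hwG

private lemma ode_w {w y z : PowerSeries ℂ} (hw : PowerSeries.constantCoeff w = 1) (c : ℂ)
    (hy : w * d⁄dX ℂ y = C c * (d⁄dX ℂ w * y))
    (hz : w * d⁄dX ℂ z = C c * (d⁄dX ℂ w * z))
    (h0y : PowerSeries.coeff 0 y = 1) (h0z : PowerSeries.coeff 0 z = 1) : y = z := by
  apply ode_uniq _ h0y h0z
  have hw0 : w ≠ 0 := fun hcon => by
    rw [hcon, map_zero] at hw; exact zero_ne_one hw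
  apply mul_left_cancel₀ hw0
  linear_combination z * hy - y * hz

end ScompLemmas


/-- `a n λ_n(a+b) = (a+b) ∑_{k=0}^n k λ_k(a) λ_{n-k}(b)` for the coefficients `λ_n(s)`
defined by `w(t)^s = ∑_{n≥0} λ_n(s) F(t)^n`. -/
theorem stmt6 (F w : PowerSeries ℂ)
    (hF0 : PowerSeries.constantCoeff F = 0) (hF1 : PowerSeries.coeff 1 F ≠ 0)
    (hw : PowerSeries.constantCoeff w = 1)
    (lam : ℕ → ℂ → ℂ) (hlam0 : ∀ s : ℂ, lam 0 s = 1)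
    (hlam : ∀ (s : ℂ) (N : ℕ), PowerSeries.coeff N (cpow w s) =
      ∑ n ∈ Finset.range (N + 1), lam n s * PowerSeries.coeff N (F ^ n))
    (a b : ℂ) (ha : a ≠ 0) (n : ℕ) :
    a * (n : ℂ) * lam n (a + b) =
      (a + b) * ∑ k ∈ Finset.range (n + 1), (k : ℂ) * lam k a * lam (n - k) b := by
  set Λ : ℂ → PowerSeries ℂ := fun s => PowerSeries.mk fun k => lam k s with hΛdef
  have hcoeffΛ : ∀ (s : ℂ) (k : ℕ), PowerSeries.coeff k (Λ s) = lam k s := by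
    intro s k; rw [hΛdef]; exact coeff_mk _ _
  have h1 : ∀ s : ℂ, cpow w s = scomp (Λ s) F := by
    intro s; ext N
    rw [hlam s N, coeff_scomp]
    exact Finset.sum_congr rfl fun k _ => by rw [hcoeffΛ]
  have hode : ∀ s : ℂ, w * d⁄dX ℂ (cpow w s) = C s * (d⁄dX ℂ w * cpow w s) :=
    fun s => cpow_ode w hw s
  have h0 : ∀ s : ℂ, PowerSeries.coeff 0 (cpow w s) = 1 := fun s => cpow_coeff0 w s
  have hmul : ∀ s u : ℂ, Λ (s+u) = Λ s * Λ u := by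
    intro s u
    apply scomp_inj hF0 hF1
    rw [scomp_mul hF0, ← h1, ← h1, ← h1]
    apply ode_w hw (s+u) (hode (s+u)) ?_ (h0 (s+u)) ?_
    · rw [Derivation.leibniz, smul_eq_mul, smul_eq_mul, map_add]
      linear_combination (cpow w u) * hode s + (cpow w s) * hode u
    · rw [coeff_zero_eq_constantCoeff, map_mul, ← coeff_zero_eq_constantCoeff_apply,
        ← coeff_zero_eq_constantCoeff_apply, h0, h0, mul_one]
  have h2 : ∀ s : ℂ, (w * d⁄dX ℂ F) * scomp (d⁄dX ℂ (Λ s)) F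
      = C s * (d⁄dX ℂ w * scomp (Λ s) F) := by
    intro s
    have hx := hode s
    rw [h1 s, derivative_scomp hF0] at hx
    linear_combination hx
  have hwDF : w * d⁄dX ℂ F ≠ 0 := by
    intro hcontra
    have hcc : PowerSeries.constantCoeff (w * d⁄dX ℂ F) = PowerSeries.coeff 1 F := by
      rw [map_mul, hw, one_mul, ← coeff_zero_eq_constantCoeff_apply, coeff_derivative]
      push_cast; ring
    rw [hcontra, map_zero] at hcc
    exact hF1 hcc.symm
  have h3 : ∀ s u : ℂ, C u * (d⁄dX ℂ (Λ s) * Λ u) = C s * (d⁄dX ℂ (Λ u) * Λ s) := by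
    intro s u
    apply scomp_inj hF0 hF1
    apply mul_left_cancel₀ hwDF
    have e1 : ∀ (p q : PowerSeries ℂ) (c : ℂ),
        scomp (C c * (p * q)) F = C c * (scomp p F * scomp q F) := by
      intro p q c
      rw [← smul_eq_C_mul (p * q) c, scomp_smul, scomp_mul hF0, smul_eq_C_mul]
    rw [e1, e1]
    linear_combination (C u * scomp (Λ u) F) * h2 s - (C s * scomp (Λ s) F) * h2 u
  have hXD : ∀ (s : ℂ) (k : ℕ),
      PowerSeries.coeff k (X * d⁄dX ℂ (Λ s)) = (k:ℂ) * lam k s := by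
    intro s k
    match k with
    | 0 => rw [coeff_zero_X_mul]; simp
    | j+1 =>
      rw [coeff_succ_X_mul, coeff_derivative, hcoeffΛ]
      push_cast; ring
  cases n with
  | zero => simp
  | succ m =>
    have hser : C a * (X * d⁄dX ℂ (Λ (a+b))) = C (a+b) * (X * d⁄dX ℂ (Λ a) * Λ b) := by
      rw [hmul a b, Derivation.leibniz, smul_eq_mul, smul_eq_mul, map_add]
      linear_combination (X : ℂ⟦X⟧) * h3 b a
    have hc := congrArg (PowerSeries.coeff (m+1)) hser
    rw [coeff_C_mul, coeff_C_mul, hXD (a+b) (m+1), coeff_mul,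
      Finset.Nat.sum_antidiagonal_eq_sum_range_succ_mk] at hc
    have hterm : ∀ k ∈ Finset.range (m+2),
        PowerSeries.coeff k (X * d⁄dX ℂ (Λ a)) * PowerSeries.coeff (m+1-k) (Λ b)
        = (k:ℂ) * lam k a * lam (m+1-k) b := fun k _ => by rw [hXD, hcoeffΛ]
    rw [Finset.sum_congr rfl hterm] at hc
    push_cast at hc ⊢
    linear_combination hc
end
end

section
/- With f_n(s) as defined by the recurrence f_1(s)=1, f_{n+1}(s) = ps f_n(s) + (1/c_1) \sum_{k=1}^3 a_k q_k^2 \sum_{i=1}^n binom(n,i) f_i(-q_k/p) f_{n+1-i}(s), and c_j := a_1 q_1^j + a_2 q_2^j + a_3 q_3^j, one has f_2(s) = ps + c_2/c_1, f_3(s) = (ps)^2 + 3(c_2/c_1) ps + (3c_2^2 - c_1 c_3)/c_1^2, and f_4(s) = (ps)^3 + 6(c_2/c_1)(ps)^2 + ((15 c_2^2 - 4 c_1 c_3)/c_1^2) ps + (15 c_2^3 - 10 c_1 c_2 c_3 + c_1^2 c_4)/c_1^3. -/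
open PowerSeries Finset
noncomputable section

set_option maxHeartbeats 2000000

/-- Explicit values `f_2`, `f_3`, `f_4` of the polynomials `f_n(s)` defined by the
recurrence `f_1(s)=1`,
`f_{n+1}(s) = ps f_n(s) + (1/c₁) ∑_{k=1}^3 a_k q_k² ∑_{i=1}^n binom(n,i) f_i(-q_k/p) f_{n+1-i}(s)`. -/
theorem stmt15 (p : ℂ) (hp : p ≠ 0) (a q : ℕ → ℂ)
    (hsum : a 1 + a 2 + a 3 = 0) (c : ℕ → ℂ)
    (hc : ∀ j : ℕ, c j = a 1 * q 1 ^ j + a 2 * q 2 ^ j + a 3 * q 3 ^ j)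
    (hc₁ : c 1 ≠ 0)
    (f : ℕ → ℂ → ℂ) (hf1 : ∀ s : ℂ, f 1 s = 1)
    (hrec : ∀ n : ℕ, 1 ≤ n → ∀ s : ℂ,
      f (n + 1) s = p * s * f n s + (1 / c 1) *
        ∑ k ∈ Finset.Icc 1 3, a k * (q k) ^ 2 *
          ∑ i ∈ Finset.Icc 1 n, (n.choose i : ℂ) * f i (-(q k) / p) * f (n + 1 - i) s) :
    ∀ s : ℂ,
      f 2 s = p * s + c 2 / c 1 ∧
      f 3 s = (p * s) ^ 2 + 3 * (c 2 / c 1) * (p * s) +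
        (3 * (c 2) ^ 2 - c 1 * c 3) / (c 1) ^ 2 ∧
      f 4 s = (p * s) ^ 3 + 6 * (c 2 / c 1) * (p * s) ^ 2 +
        ((15 * (c 2) ^ 2 - 4 * c 1 * c 3) / (c 1) ^ 2) * (p * s) +
        (15 * (c 2) ^ 3 - 10 * c 1 * c 2 * c 3 + (c 1) ^ 2 * c 4) / (c 1) ^ 3 := by
  have hinv : c 1 * (c 1)⁻¹ = 1 := mul_inv_cancel₀ hc₁
  have hI3 : Finset.Icc 1 3 = ({1, 2, 3} : Finset ℕ) := by decide
  have hI1 : Finset.Icc 1 1 = ({1} : Finset ℕ) := by decide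
  have hI2 : Finset.Icc 1 2 = ({1, 2} : Finset ℕ) := by decide
  have h2 : ∀ s : ℂ, f 2 s = p * s + c 2 / c 1 := by
    intro s
    have h := hrec 1 le_rfl s
    rw [hI3, hI1] at h
    simp only [Finset.sum_insert, Finset.mem_insert, Finset.mem_singleton,
      Finset.sum_singleton] at h
    norm_num [hf1] at h
    rw [h]
    linear_combination (-(1 / c 1)) * hc 2
  have e2 : ∀ k : ℕ, f 2 (-q k / p) = -q k + c 2 / c 1 := by
    intro k; rw [h2]; field_simp
  have h3 : ∀ s : ℂ, f 3 s = (p * s) ^ 2 + 3 * (c 2 / c 1) * (p * s) +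
      (3 * (c 2) ^ 2 - c 1 * c 3) / (c 1) ^ 2 := by
    intro s
    have h := hrec 2 (by norm_num) s
    rw [hI3, hI2] at h
    norm_num [Finset.sum_insert, Finset.mem_insert, Finset.mem_singleton,
      Finset.sum_singleton] at h
    simp only [hf1, e2, h2] at h
    rw [h]
    linear_combination (-(1 / c 1) * (2 * (p * s + c 2 / c 1) + c 2 / c 1)) * hc 2
      + (1 / c 1) * hc 3 + ((c 1)⁻¹ * c 3) * hinv
  have e3 : ∀ k : ℕ, f 3 (-q k / p) = q k ^ 2 - 3 * (c 2 / c 1) * q k +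
      (3 * (c 2) ^ 2 - c 1 * c 3) / (c 1) ^ 2 := by
    intro k; rw [h3]; field_simp; ring
  have h4 : ∀ s : ℂ, f 4 s = (p * s) ^ 3 + 6 * (c 2 / c 1) * (p * s) ^ 2 +
      ((15 * (c 2) ^ 2 - 4 * c 1 * c 3) / (c 1) ^ 2) * (p * s) +
      (15 * (c 2) ^ 3 - 10 * c 1 * c 2 * c 3 + (c 1) ^ 2 * c 4) / (c 1) ^ 3 := by
    intro s
    have h := hrec 3 (by norm_num) s
    rw [hI3] at h
    norm_num [Finset.sum_insert, Finset.mem_insert, Finset.mem_singleton,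
      Finset.sum_singleton] at h
    simp only [hf1, e2, e3, h2, h3] at h
    rw [h]
    linear_combination
      (-(1 / c 1) * (3 * ((p * s) ^ 2 + 3 * (c 2 / c 1) * (p * s)
          + (3 * c 2 ^ 2 - c 1 * c 3) / c 1 ^ 2)
        + 3 * (c 2 / c 1) * (p * s + c 2 / c 1)
        + (3 * c 2 ^ 2 - c 1 * c 3) / c 1 ^ 2)) * hc 2
      + ((1 / c 1) * (3 * (p * s + c 2 / c 1) + 3 * (c 2 / c 1))) * hc 3
      + (-(1 / c 1)) * hc 4
      + (3 * p * s * c 3 * (c 1)⁻¹ + 6 * c 2 * c 3 * (c 1)⁻¹ ^ 2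
          - (c 1)⁻¹ * c 4 * (c 1 * (c 1)⁻¹ + 1)) * hinv
  exact fun s => ⟨h2 s, h3 s, h4 s⟩
end
end

section
/- Let \chi_n(k) for n \ge 1, 0 \le k \le n-1 be defined by f_n(s) = \sum_{k=0}^{n-1} \chi_n(k) (ps)^k, where f_n satisfies the m=3 recurrence above and each f_n is a polynomial in ps of degree n-1 with leading coefficient 1. Then the \chi satisfy: for all 0 \le m \le n, \sum_{k=0}^{n} \chi_{n+1}(k) binom(k,m) (-1)^{k-m} c_{k-m+1} = c_1 \chi_n(m-1), where \chi_n(-1) := 0 and c_j = a_1 q_1^j + a_2 q_2^j + a_3 q_3^j. -/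
open PowerSeries Finset
noncomputable section

set_option maxHeartbeats 1000000

open Nat in
lemma choose3 (m u w : ℕ) :
    (((m+u+w+1).choose (m+u+1) : ℂ)) * ((m+u+1).choose (m+1))
      + ((m+u+w+1).choose (u+1)) * ((m+w+1).choose (m+1))
    = ((m+u+w+2).choose (m+1)) * ((u+w+1).choose (u+1)) := by
  have cast_cmf : ∀ N K : ℕ, K ≤ N →
      ((N.choose K : ℂ)) * ((K ! : ℂ) * ((N-K) ! : ℂ)) = (N ! : ℂ) := by
    intro N K h
    have := Nat.choose_mul_factorial_mul_factorial h
    push_cast [← this]; ring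
  have g1 := cast_cmf (m+u+w+1) (m+u+1) (by omega)
  have g2 := cast_cmf (m+u+1) (m+1) (by omega)
  have g3 := cast_cmf (m+u+w+1) (u+1) (by omega)
  have g4 := cast_cmf (m+w+1) (m+1) (by omega)
  have g5 := cast_cmf (m+u+w+2) (m+1) (by omega)
  have g6 := cast_cmf (u+w+1) (u+1) (by omega)
  rw [show m+u+w+1 - (m+u+1) = w by omega] at g1
  rw [show m+u+1 - (m+1) = u by omega] at g2
  rw [show m+u+w+1 - (u+1) = m+w by omega] at g3
  rw [show m+w+1 - (m+1) = w by omega] at g4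
  rw [show m+u+w+2 - (m+1) = u+w+1 by omega] at g5
  rw [show u+w+1 - (u+1) = w by omega] at g6
  have e1 : ((m+u+w+2) ! : ℂ) = ((m:ℂ)+u+w+2) * (m+u+w+1) ! := by
    rw [show m+u+w+2 = (m+u+w+1)+1 from rfl, Nat.factorial_succ]; push_cast; ring
  have e2 : ((m+w+1) ! : ℂ) = ((m:ℂ)+w+1) * (m+w) ! := by
    rw [show m+w+1 = (m+w)+1 from rfl, Nat.factorial_succ]; push_cast; ring
  have e3 : ((u+1) ! : ℂ) = ((u:ℂ)+1) * u ! := by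
    rw [Nat.factorial_succ]; push_cast; ring
  have hD : ((m+u+1) ! : ℂ) * ((m+1) !) * (u !) * ((u+1) !) * ((m+w) !) * (w !) * ((u+w+1) !) ≠ 0 := by
    repeat' apply mul_ne_zero
    all_goals exact Nat.cast_ne_zero.2 (Nat.factorial_ne_zero _)
  apply mul_right_cancel₀ hD
  linear_combination
      (((m+u+1).choose (m+1) : ℂ) * (((u+1) !) * ((m+w) !) * ((u+w+1) !)) * (((m+1) !) * (u !))) * g1
    + ((((u+1) !) * ((m+w) !) * ((u+w+1) !)) * ((m+u+w+1) ! : ℂ)) * g2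
    + (((m+w+1).choose (m+1) : ℂ) * (((m+u+1) !) * (u !) * ((u+w+1) !)) * (((m+1) !) * (w !))) * g3
    + ((((m+u+1) !) * (u !) * ((u+w+1) !)) * ((m+u+w+1) ! : ℂ)) * g4
    - (((u+w+1).choose (u+1) : ℂ) * (((m+u+1) !) * (u !) * ((m+w) !)) * (((u+1) !) * (w !))) * g5
    - ((((m+u+1) !) * (u !) * ((m+w) !)) * ((m+u+w+2) ! : ℂ)) * g6
    + ((((m+w) !) * ((u+w+1) !) * ((m+u+w+1) !) * ((m+u+1) !)) : ℂ) * e3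
    + ((((m+u+1) !) * (u !) * ((u+w+1) !) * ((m+u+w+1) !)) : ℂ) * e2
    - ((((m+u+1) !) * (u !) * ((m+w) !) * ((u+w+1) !)) : ℂ) * e1


lemma reA' (n : ℕ) (ψ : ℕ → ℕ → ℂ) :
    ∑ k ∈ Icc 1 (n-1), ∑ m ∈ Icc 1 k, ψ k m
      = ∑ m ∈ Icc 1 n, ∑ u ∈ Icc 1 (n-m), ψ (m+u-1) m := by
  rw [Finset.sum_sigma', Finset.sum_sigma']
  apply Finset.sum_nbij' (fun x => (⟨x.2, x.1+1-x.2⟩ : (_ : ℕ) × ℕ))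
    (fun y => (⟨y.1+y.2-1, y.1⟩ : (_ : ℕ) × ℕ))
  · intro x hx; simp only [Finset.mem_sigma, Finset.mem_Icc] at hx ⊢; omega
  · intro y hy; simp only [Finset.mem_sigma, Finset.mem_Icc] at hy ⊢; omega
  · intro x hx; simp only [Finset.mem_sigma, Finset.mem_Icc] at hx
    ext <;> simp <;> omega
  · intro y hy; simp only [Finset.mem_sigma, Finset.mem_Icc] at hy
    ext <;> simp <;> omega
  · intro x hx; simp only [Finset.mem_sigma, Finset.mem_Icc] at hx
    have hxx : x.2 + (x.1+1-x.2) - 1 = x.1 := by omega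
    show ψ x.1 x.2 = ψ (x.2 + (x.1+1-x.2) - 1) x.2
    rw [hxx]


lemma reB' (n : ℕ) (ψ : ℕ → ℕ → ℂ) :
    ∑ k ∈ Icc 1 (n-1), ∑ m ∈ Icc 1 (n-k), ψ k m
      = ∑ m ∈ Icc 1 n, ∑ u ∈ Icc 1 (n-m), ψ u m := by
  rw [Finset.sum_sigma', Finset.sum_sigma']
  apply Finset.sum_nbij' (fun x => (⟨x.2, x.1⟩ : (_ : ℕ) × ℕ))
    (fun y => (⟨y.2, y.1⟩ : (_ : ℕ) × ℕ))
  · intro x hx; simp only [Finset.mem_sigma, Finset.mem_Icc] at hx ⊢; omega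
  · intro y hy; simp only [Finset.mem_sigma, Finset.mem_Icc] at hy ⊢; omega
  · intro x hx; rfl
  · intro y hy; rfl
  · intro x hx; rfl


lemma shiftIcc (N : ℕ) (hN : 1 ≤ N) (G : ℕ → ℂ) :
    G 1 + ∑ k ∈ Icc 1 (N-1), G (k+1) = ∑ k ∈ Icc 1 N, G k := by
  induction N with
  | zero => omega
  | succ n ih =>
    rcases Nat.eq_or_lt_of_le hN with h | h
    · simp [← h]
    · have hn : 1 ≤ n := by omega
      rw [show n+1-1 = n from rfl, show n = (n-1)+1 by omega]
      rw [Finset.sum_Icc_succ_top (by omega), ← add_assoc, show (n-1)+1 = n by omega, ih hn,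
        Finset.sum_Icc_succ_top (by omega)]


lemma sumIcc3 (g : ℕ → ℂ) : ∑ j ∈ Icc 1 3, g j = g 1 + g 2 + g 3 := by
  rw [show Finset.Icc 1 3 = {1, 2, 3} from rfl]
  simp [Finset.sum_insert, Finset.mem_insert]
  ring


lemma lemE (p : ℂ) (hp : p ≠ 0) (a q : ℕ → ℂ) (c : ℕ → ℂ)
    (hcc : c 1 = a 1 * q 1 + a 2 * q 2 + a 3 * q 3)
    (hc₁ : c 1 ≠ 0)
    (f : ℕ → ℂ → ℂ) (hf1 : ∀ s : ℂ, f 1 s = 1)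
    (hrec : ∀ n : ℕ, 1 ≤ n → ∀ s : ℂ,
      f (n + 1) s = p * s * f n s + (1 / c 1) *
        ∑ k ∈ Finset.Icc 1 3, a k * (q k) ^ 2 *
          ∑ i ∈ Finset.Icc 1 n, (n.choose i : ℂ) * f i (-(q k) / p) * f (n + 1 - i) s) :
    ∀ n : ℕ, 1 ≤ n → (∑ j ∈ Icc 1 3, a j * q j * f n (-(q j) / p)) =
      if n = 1 then c 1 else 0 := by
  intro n
  induction n using Nat.strong_induction_on with
  | _ n ih =>
    intro hn
    match n, hn with
    | 1, _ =>
      rw [if_pos rfl]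
      rw [sumIcc3 (fun j => a j * q j * f 1 (-(q j)/p))]
      simp only [hf1]
      rw [hcc]; ring
    | (m+2), _ =>
      set n := m + 1 with hndef
      have hn1 : 1 ≤ n := by omega
      have expand : ∀ j ∈ Icc 1 3, a j * q j * f (n+1) (-(q j) / p)
          = a j * q j * (-(q j)) * f n (-(q j)/p)
          + (1/c 1) * ∑ K ∈ Icc 1 3, ∑ i ∈ Icc 1 n,
              (a K * q K^2 * ((n.choose i : ℂ) * f i (-(q K)/p))
                * (a j * q j * f (n+1-i) (-(q j)/p))) := by
        intro j _
        rw [hrec n hn1, show p * (-(q j)/p) = -(q j) by field_simp]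
        simp only [mul_add, Finset.mul_sum]
        congr 1
        · ring
        · exact Finset.sum_congr rfl fun K _ => Finset.sum_congr rfl fun i _ => by ring
      rw [Finset.sum_congr rfl expand, Finset.sum_add_distrib]
      have swap : (∑ j ∈ Icc 1 3, (1/c 1) * ∑ K ∈ Icc 1 3, ∑ i ∈ Icc 1 n,
              (a K * q K^2 * ((n.choose i : ℂ) * f i (-(q K)/p))
                * (a j * q j * f (n+1-i) (-(q j)/p))))
          = (1/c 1) * ∑ K ∈ Icc 1 3, ∑ i ∈ Icc 1 n, ∑ j ∈ Icc 1 3,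
              (a K * q K^2 * ((n.choose i : ℂ) * f i (-(q K)/p))
                * (a j * q j * f (n+1-i) (-(q j)/p))) := by
        rw [← Finset.mul_sum]
        congr 1
        rw [Finset.sum_comm]
        exact Finset.sum_congr rfl fun K _ => Finset.sum_comm
      rw [swap]
      have inner : ∀ K ∈ Icc 1 3, (∑ i ∈ Icc 1 n, ∑ j ∈ Icc 1 3,
              (a K * q K^2 * ((n.choose i : ℂ) * f i (-(q K)/p))
                * (a j * q j * f (n+1-i) (-(q j)/p))))
          = a K * q K^2 * ((n.choose n : ℂ) * f n (-(q K)/p)) * c 1 := by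
        intro K _
        have pere : ∀ i ∈ Icc 1 n, (∑ j ∈ Icc 1 3,
              (a K * q K^2 * ((n.choose i : ℂ) * f i (-(q K)/p))
                * (a j * q j * f (n+1-i) (-(q j)/p))))
            = a K * q K^2 * ((n.choose i : ℂ) * f i (-(q K)/p))
                * (if n+1-i = 1 then c 1 else 0) := by
          intro i hi
          simp only [Finset.mem_Icc] at hi
          rw [← Finset.mul_sum, ih (n+1-i) (by omega) (by omega)]
        rw [Finset.sum_congr rfl pere]
        rw [Finset.sum_eq_single_of_mem n (by simp [Finset.mem_Icc]; omega)
          (fun i hi hne => by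
            simp only [Finset.mem_Icc] at hi
            rw [if_neg (by omega), mul_zero])]
        rw [if_pos (by omega)]
      rw [Finset.sum_congr rfl inner, if_neg (by omega), Nat.choose_self]
      rw [sumIcc3 (fun j => a j * q j * (-(q j)) * f n (-(q j)/p)),
        sumIcc3 (fun K => a K * q K^2 * ((1:ℕ) * f n (-(q K)/p)) * c 1)]
      push_cast
      field_simp
      ring

lemma lemM (p : ℂ) (hp : p ≠ 0) (c : ℕ → ℂ) (hc₁ : c 1 ≠ 0)
    (f : ℕ → ℂ → ℂ) (hf1 : ∀ s : ℂ, f 1 s = 1) (d : ℕ → ℂ)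
    (hrec' : ∀ n : ℕ, 1 ≤ n → ∀ s : ℂ,
      f (n + 1) s = p * s * f n s + (1 / c 1) *
        ∑ i ∈ Finset.Icc 1 n, (n.choose i : ℂ) * d i * f (n + 1 - i) s) :
    ∀ n : ℕ, ∀ s v : ℂ, f (n+1) (s+v) = f (n+1) v +
      p * s * ∑ k ∈ Icc 1 n, (n.choose k : ℂ) * f k s * f (n+1-k) v := by
  intro n
  induction n using Nat.strong_induction_on with
  | _ n ih =>
    match n with
    | 0 =>
      intro s v
      rw [Finset.Icc_eq_empty (by omega), Finset.sum_empty, hf1, hf1]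
      ring
    | (N+1) =>
      intro s v
      have h1 := hrec' (N+1) (by omega) (s+v)
      have h2 := ih N (by omega) s v
      have h4 := hrec' (N+1) (by omega) v
      -- expansion of the inner convolution at s+v
      have H3 : (∑ i ∈ Icc 1 (N+1), ((N+1).choose i : ℂ) * d i * f (N+1+1-i) (s+v))
          = (∑ i ∈ Icc 1 (N+1), ((N+1).choose i : ℂ) * d i * f (N+1+1-i) v)
          + p * s * ∑ i ∈ Icc 1 (N+1), ((N+1).choose i : ℂ) * d i *
              (∑ l ∈ Icc 1 (N+1-i), ((N+1-i).choose l : ℂ) * f l s * f (N+1+1-i-l) v) := by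
        rw [Finset.mul_sum, ← Finset.sum_add_distrib]
        refine Finset.sum_congr rfl fun i hi => ?_
        simp only [Finset.mem_Icc] at hi
        have h := ih (N+1-i) (by omega) s v
        rw [show N+1-i+1 = N+1+1-i by omega] at h
        rw [h]; ring
      -- the key identity ("star")
      have subs1 : (∑ k ∈ Icc 1 N, (N.choose k : ℂ) * (p * s * f k s) * f (N+1-k) v)
          = (∑ k ∈ Icc 1 N, (N.choose k : ℂ) * f (k+1) s * f (N+1-k) v)
          - (1/c 1) * ∑ k ∈ Icc 1 N, ∑ m ∈ Icc 1 k,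
              (N.choose k : ℂ) * (k.choose m : ℂ) * d m * f (k+1-m) s * f (N+1-k) v := by
        rw [Finset.mul_sum, ← Finset.sum_sub_distrib]
        refine Finset.sum_congr rfl fun k hk => ?_
        simp only [Finset.mem_Icc] at hk
        have h := hrec' k hk.1 s
        have e : (∑ m ∈ Icc 1 k, (N.choose k : ℂ) * (k.choose m : ℂ) * d m * f (k+1-m) s * f (N+1-k) v)
            = (N.choose k : ℂ) * f (N+1-k) v * ∑ m ∈ Icc 1 k, (k.choose m : ℂ) * d m * f (k+1-m) s := by
          rw [Finset.mul_sum]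
          exact Finset.sum_congr rfl fun m _ => by ring
        rw [e]
        linear_combination (-((N.choose k : ℂ) * f (N+1-k) v)) * h
      have subs2 : (∑ k ∈ Icc 1 N, (N.choose k : ℂ) * f k s * (p * v * f (N+1-k) v))
          = (∑ k ∈ Icc 1 N, (N.choose k : ℂ) * f k s * f (N+1+1-k) v)
          - (1/c 1) * ∑ k ∈ Icc 1 N, ∑ m ∈ Icc 1 (N+1-k),
              (N.choose k : ℂ) * ((N+1-k).choose m : ℂ) * d m * f k s * f (N+1+1-k-m) v := by
        rw [Finset.mul_sum, ← Finset.sum_sub_distrib]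
        refine Finset.sum_congr rfl fun k hk => ?_
        simp only [Finset.mem_Icc] at hk
        have h := hrec' (N+1-k) (by omega) v
        rw [show N+1-k+1 = N+1+1-k by omega] at h
        have e : (∑ m ∈ Icc 1 (N+1-k), (N.choose k : ℂ) * ((N+1-k).choose m : ℂ) * d m * f k s * f (N+1+1-k-m) v)
            = (N.choose k : ℂ) * f k s * ∑ m ∈ Icc 1 (N+1-k), ((N+1-k).choose m : ℂ) * d m * f (N+1+1-k-m) v := by
          rw [Finset.mul_sum]
          exact Finset.sum_congr rfl fun m _ => by ring
        rw [e]
        linear_combination (-((N.choose k : ℂ) * f k s)) * h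
      -- Pascal part
      have pasc : f (N+1) v + (∑ k ∈ Icc 1 N, (N.choose k : ℂ) * f (k+1) s * f (N+1-k) v)
          + (∑ k ∈ Icc 1 N, (N.choose k : ℂ) * f k s * f (N+1+1-k) v)
          = ∑ k ∈ Icc 1 (N+1), ((N+1).choose k : ℂ) * f k s * f (N+1+1-k) v := by
        have t2ext := Finset.sum_Icc_succ_top (show 1 ≤ N+1 by omega)
          (fun k => (N.choose k : ℂ) * f k s * f (N+1+1-k) v)
        have t1shift := shiftIcc (N+1) (by omega) (fun k => (N.choose (k-1) : ℂ) * f k s * f (N+1+1-k) v)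
        simp only [show N+1-1 = N from rfl] at t1shift
        have t1eq : (∑ k ∈ Icc 1 N, (N.choose ((k+1)-1) : ℂ) * f (k+1) s * f (N+1+1-(k+1)) v)
            = ∑ k ∈ Icc 1 N, (N.choose k : ℂ) * f (k+1) s * f (N+1-k) v := by
          refine Finset.sum_congr rfl fun k hk => ?_
          simp only [Finset.mem_Icc] at hk
          rw [show (k+1)-1 = k from rfl, show N+1+1-(k+1) = N+1-k by omega]
        rw [t1eq] at t1shift
        have pascsum : (∑ k ∈ Icc 1 (N+1), ((N+1).choose k : ℂ) * f k s * f (N+1+1-k) v)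
            = (∑ k ∈ Icc 1 (N+1), (N.choose (k-1) : ℂ) * f k s * f (N+1+1-k) v)
            + ∑ k ∈ Icc 1 (N+1), (N.choose k : ℂ) * f k s * f (N+1+1-k) v := by
          rw [← Finset.sum_add_distrib]
          refine Finset.sum_congr rfl fun k hk => ?_
          simp only [Finset.mem_Icc] at hk
          obtain ⟨K, rfl⟩ : ∃ K, k = K+1 := ⟨k-1, by omega⟩
          rw [Nat.choose_succ_succ' N K]
          push_cast
          ring
        rw [pascsum, ← t1shift, t2ext, Nat.choose_eq_zero_of_lt (show N < N+1 by omega)]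
        simp only [Nat.cast_zero, zero_mul, add_zero, hf1, Nat.choose_zero_right,
          show (1:ℕ)-1 = 0 from rfl, Nat.cast_one, one_mul, mul_one,
          show N+1+1-1 = N+1 from rfl]
      -- combinatorial part
      have combA : (∑ k ∈ Icc 1 N, ∑ m ∈ Icc 1 k,
              (N.choose k : ℂ) * (k.choose m : ℂ) * d m * f (k+1-m) s * f (N+1-k) v)
          = ∑ m ∈ Icc 1 (N+1), ∑ u ∈ Icc 1 (N+1-m),
              ((N.choose (m+u-1) : ℂ) * ((m+u-1).choose m : ℂ)) * d m * f u s * f (N+1+1-m-u) v := by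
        have h := reA' (N+1) (fun k m => (N.choose k : ℂ) * (k.choose m : ℂ) * d m * f (k+1-m) s * f (N+1-k) v)
        rw [show N+1-1 = N from rfl] at h
        rw [h]
        refine Finset.sum_congr rfl fun m hm => Finset.sum_congr rfl fun u hu => ?_
        simp only [Finset.mem_Icc] at hm hu
        rw [show (m+u-1)+1-m = u by omega, show N+1-(m+u-1) = N+1+1-m-u by omega]
      have combB : (∑ k ∈ Icc 1 N, ∑ m ∈ Icc 1 (N+1-k),
              (N.choose k : ℂ) * ((N+1-k).choose m : ℂ) * d m * f k s * f (N+1+1-k-m) v)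
          = ∑ m ∈ Icc 1 (N+1), ∑ u ∈ Icc 1 (N+1-m),
              ((N.choose u : ℂ) * ((N+1-u).choose m : ℂ)) * d m * f u s * f (N+1+1-m-u) v := by
        have h := reB' (N+1) (fun k m => (N.choose k : ℂ) * ((N+1-k).choose m : ℂ) * d m * f k s * f (N+1+1-k-m) v)
        rw [show N+1-1 = N from rfl] at h
        rw [h]
        refine Finset.sum_congr rfl fun m hm => Finset.sum_congr rfl fun u hu => ?_
        simp only [Finset.mem_Icc] at hm hu
        rw [show N+1+1-u-m = N+1+1-m-u by omega]
      have combC : (∑ i ∈ Icc 1 (N+1), ((N+1).choose i : ℂ) * d i *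
              (∑ l ∈ Icc 1 (N+1-i), ((N+1-i).choose l : ℂ) * f l s * f (N+1+1-i-l) v))
          = (∑ k ∈ Icc 1 N, ∑ m ∈ Icc 1 k,
              (N.choose k : ℂ) * (k.choose m : ℂ) * d m * f (k+1-m) s * f (N+1-k) v)
          + ∑ k ∈ Icc 1 N, ∑ m ∈ Icc 1 (N+1-k),
              (N.choose k : ℂ) * ((N+1-k).choose m : ℂ) * d m * f k s * f (N+1+1-k-m) v := by
        rw [combA, combB, ← Finset.sum_add_distrib]
        refine Finset.sum_congr rfl fun m hm => ?_
        rw [Finset.mul_sum, ← Finset.sum_add_distrib]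
        refine Finset.sum_congr rfl fun u hu => ?_
        simp only [Finset.mem_Icc] at hm hu
        have h := choose3 (m-1) (u-1) (N+1-m-u)
        rw [show (m-1)+(u-1)+(N+1-m-u)+2 = N+1 by omega,
          show (m-1)+(u-1)+(N+1-m-u)+1 = N by omega,
          show (m-1)+(u-1)+1 = m+u-1 by omega,
          show (m-1)+(N+1-m-u)+1 = N+1-u by omega,
          show (u-1)+(N+1-m-u)+1 = N+1-m by omega,
          show (m-1)+1 = m by omega, show (u-1)+1 = u by omega] at h
        linear_combination (-(d m * f u s * f (N+1+1-m-u) v)) * h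
      -- star
      have star : f (N+1) v
          + (p*s + p*v) * (∑ k ∈ Icc 1 N, (N.choose k : ℂ) * f k s * f (N+1-k) v)
          + (1/c 1) * (∑ i ∈ Icc 1 (N+1), ((N+1).choose i : ℂ) * d i *
              (∑ l ∈ Icc 1 (N+1-i), ((N+1-i).choose l : ℂ) * f l s * f (N+1+1-i-l) v))
          = ∑ k ∈ Icc 1 (N+1), ((N+1).choose k : ℂ) * f k s * f (N+1+1-k) v := by
        have e0 : (p*s + p*v) * (∑ k ∈ Icc 1 N, (N.choose k : ℂ) * f k s * f (N+1-k) v)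
            = (∑ k ∈ Icc 1 N, (N.choose k : ℂ) * (p * s * f k s) * f (N+1-k) v)
            + ∑ k ∈ Icc 1 N, (N.choose k : ℂ) * f k s * (p * v * f (N+1-k) v) := by
          rw [Finset.mul_sum, ← Finset.sum_add_distrib]
          exact Finset.sum_congr rfl fun k _ => by ring
        rw [e0, subs1, subs2, combC, ← pasc]
        ring
      -- conclude
      rw [h1, h2, H3, h4]
      linear_combination (p*s) * star

lemma lemRec' (p : ℂ) (a q : ℕ → ℂ) (c : ℕ → ℂ)
    (f : ℕ → ℂ → ℂ)
    (hrec : ∀ n : ℕ, 1 ≤ n → ∀ s : ℂ,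
      f (n + 1) s = p * s * f n s + (1 / c 1) *
        ∑ k ∈ Finset.Icc 1 3, a k * (q k) ^ 2 *
          ∑ i ∈ Finset.Icc 1 n, (n.choose i : ℂ) * f i (-(q k) / p) * f (n + 1 - i) s)
    (d : ℕ → ℂ)
    (hd : ∀ i : ℕ, d i = ∑ K ∈ Icc 1 3, a K * q K ^ 2 * f i (-(q K)/p)) :
    ∀ n : ℕ, 1 ≤ n → ∀ s : ℂ,
      f (n + 1) s = p * s * f n s + (1 / c 1) *
        ∑ i ∈ Finset.Icc 1 n, (n.choose i : ℂ) * d i * f (n + 1 - i) s := by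
  intro n hn s
  rw [hrec n hn s]
  congr 2
  calc ∑ K ∈ Icc 1 3, a K * q K ^ 2 *
          ∑ i ∈ Icc 1 n, (n.choose i : ℂ) * f i (-(q K) / p) * f (n + 1 - i) s
      = ∑ K ∈ Icc 1 3, ∑ i ∈ Icc 1 n,
          a K * q K ^ 2 * ((n.choose i : ℂ) * f i (-(q K) / p) * f (n + 1 - i) s) :=
        Finset.sum_congr rfl fun K _ => Finset.mul_sum _ _ _
    _ = ∑ i ∈ Icc 1 n, ∑ K ∈ Icc 1 3,
          a K * q K ^ 2 * ((n.choose i : ℂ) * f i (-(q K) / p) * f (n + 1 - i) s) :=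
        Finset.sum_comm
    _ = ∑ i ∈ Icc 1 n, (n.choose i : ℂ) * d i * f (n + 1 - i) s := by
        refine Finset.sum_congr rfl fun i _ => ?_
        rw [hd i, Finset.mul_sum, Finset.sum_mul]
        exact Finset.sum_congr rfl fun K _ => by ring


lemma lemI (p : ℂ) (hp : p ≠ 0) (a q : ℕ → ℂ) (c : ℕ → ℂ) (hc₁ : c 1 ≠ 0)
    (f : ℕ → ℂ → ℂ) (hf1 : ∀ s : ℂ, f 1 s = 1)
    (hE : ∀ n : ℕ, 1 ≤ n → (∑ j ∈ Icc 1 3, a j * q j * f n (-(q j) / p)) =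
      if n = 1 then c 1 else 0)
    (hM : ∀ n : ℕ, ∀ s v : ℂ, f (n+1) (s+v) = f (n+1) v +
      p * s * ∑ k ∈ Icc 1 n, (n.choose k : ℂ) * f k s * f (n+1-k) v) :
    ∀ n : ℕ, 1 ≤ n → ∀ s : ℂ,
      (∑ j ∈ Icc 1 3, a j * q j * f (n+1) (s + -(q j) / p)) = c 1 * (p * s) * f n s := by
  intro n hn s
  have step1 : ∀ j ∈ Icc 1 3, a j * q j * f (n+1) (s + -(q j)/p)
      = a j * q j * f (n+1) (-(q j)/p)
      + ∑ k ∈ Icc 1 n, (p * s * ((n.choose k : ℂ) * f k s)) * (a j * q j * f (n+1-k) (-(q j)/p)) := by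
    intro j _
    rw [hM n s (-(q j)/p)]
    simp only [mul_add, Finset.mul_sum]
    congr 1
    exact Finset.sum_congr rfl fun k _ => by ring
  rw [Finset.sum_congr rfl step1, Finset.sum_add_distrib, hE (n+1) (by omega),
    if_neg (by omega), Finset.sum_comm]
  have step2 : ∀ k ∈ Icc 1 n, (∑ j ∈ Icc 1 3,
        (p * s * ((n.choose k : ℂ) * f k s)) * (a j * q j * f (n+1-k) (-(q j)/p)))
      = (p * s * ((n.choose k : ℂ) * f k s)) * (if n+1-k = 1 then c 1 else 0) := by
    intro k hk
    simp only [Finset.mem_Icc] at hk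
    rw [← Finset.mul_sum, hE (n+1-k) (by omega)]
  rw [Finset.sum_congr rfl step2,
    Finset.sum_eq_single_of_mem n (by simp only [Finset.mem_Icc]; omega)
      (fun k hk hne => by
        simp only [Finset.mem_Icc] at hk
        rw [if_neg (by omega), mul_zero]),
    if_pos (by omega), Nat.choose_self, Nat.cast_one]
  ring

/-- The coefficients `χ_n(k)` of `f_n(s) = ∑_{k=0}^{n-1} χ_n(k)(ps)^k` satisfy the
triangular system `∑_{k=0}^n χ_{n+1}(k) binom(k,m) (-1)^{k-m} c_{k-m+1} = c₁ χ_n(m-1)`. -/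
theorem stmt16 (p : ℂ) (hp : p ≠ 0) (a q : ℕ → ℂ)
    (hsum : a 1 + a 2 + a 3 = 0) (c : ℕ → ℂ)
    (hc : ∀ j : ℕ, c j = a 1 * q 1 ^ j + a 2 * q 2 ^ j + a 3 * q 3 ^ j)
    (hc₁ : c 1 ≠ 0)
    (f : ℕ → ℂ → ℂ) (hf1 : ∀ s : ℂ, f 1 s = 1)
    (hrec : ∀ n : ℕ, 1 ≤ n → ∀ s : ℂ,
      f (n + 1) s = p * s * f n s + (1 / c 1) *
        ∑ k ∈ Finset.Icc 1 3, a k * (q k) ^ 2 *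
          ∑ i ∈ Finset.Icc 1 n, (n.choose i : ℂ) * f i (-(q k) / p) * f (n + 1 - i) s)
    (χ : ℕ → ℕ → ℂ)
    (hχ : ∀ n : ℕ, 1 ≤ n → ∀ s : ℂ,
      f n s = ∑ k ∈ Finset.range n, χ n k * (p * s) ^ k)
    (hlead : ∀ n : ℕ, 1 ≤ n → χ n (n - 1) = 1) :
    ∀ n : ℕ, 1 ≤ n → ∀ m : ℕ, m ≤ n →
      ∑ k ∈ Finset.range (n + 1),
          χ (n + 1) k * (k.choose m : ℂ) * (-1) ^ (k - m) * c (k - m + 1) =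
        c 1 * (if m = 0 then 0 else χ n (m - 1)) := by
  have hcc : c 1 = a 1 * q 1 + a 2 * q 2 + a 3 * q 3 := by
    rw [hc 1]; simp [pow_one]
  have hrec' := lemRec' p a q c f hrec
    (fun i => ∑ K ∈ Icc 1 3, a K * q K ^ 2 * f i (-(q K)/p)) (fun i => rfl)
  have hE := lemE p hp a q c hcc hc₁ f hf1 hrec
  have hM := lemM p hp c hc₁ f hf1
    (fun i => ∑ K ∈ Icc 1 3, a K * q K ^ 2 * f i (-(q K)/p)) hrec'
  have hI := lemI p hp a q c hc₁ f hf1 hE hM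
  intro n hn m hm
  set F1 : Polynomial ℂ := ∑ j ∈ Icc 1 3, Polynomial.C (a j * q j) *
      ∑ k ∈ Finset.range (n+1), Polynomial.C (χ (n+1) k) *
        (Polynomial.X + Polynomial.C (-(q j))) ^ k with hF1
  set F2 : Polynomial ℂ := Polynomial.C (c 1) *
      ∑ k ∈ Finset.range n, Polynomial.C (χ n k) * Polynomial.X ^ (k+1) with hF2
  have hFeq : F1 = F2 := by
    apply Polynomial.funext
    intro u
    have hs := hI n hn (u/p)
    rw [hχ n hn (u/p)] at hs
    have hrw : ∀ j ∈ Icc 1 3, a j * q j * f (n+1) (u/p + -(q j)/p)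
        = a j * q j * ∑ k ∈ Finset.range (n+1), χ (n+1) k * (u + -(q j))^k := by
      intro j _
      rw [hχ (n+1) (by omega) (u/p + -(q j)/p),
        show p * (u/p + -(q j)/p) = u + -(q j) by field_simp]
    rw [Finset.sum_congr rfl hrw, show p * (u/p) = u by field_simp] at hs
    rw [hF1, hF2]
    simp only [Polynomial.eval_finset_sum, Polynomial.eval_mul, Polynomial.eval_C,
      Polynomial.eval_pow, Polynomial.eval_add, Polynomial.eval_X]
    rw [hs, Finset.mul_sum, Finset.mul_sum]
    exact Finset.sum_congr rfl fun k _ => by ring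
  have hco := congrArg (fun P : Polynomial ℂ => P.coeff m) hFeq
  simp only [hF1, hF2, Polynomial.finset_sum_coeff, Polynomial.coeff_C_mul,
    Polynomial.coeff_X_add_C_pow, Polynomial.coeff_X_pow] at hco
  -- hco : Σ_j (a j*q j) * Σ_k χ (n+1) k * ((-(q j))^(k-m) * (k.choose m : ℂ))
  --        = c 1 * Σ_k χ n k * (if k+1 = m then 1 else 0)
  calc ∑ k ∈ Finset.range (n + 1),
          χ (n + 1) k * (k.choose m : ℂ) * (-1) ^ (k - m) * c (k - m + 1)
      = ∑ k ∈ Finset.range (n+1), ∑ j ∈ Icc 1 3,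
          (a j * q j) * (χ (n+1) k * ((-(q j))^(k-m) * (k.choose m : ℂ))) := by
        refine Finset.sum_congr rfl fun k _ => ?_
        rw [hc (k-m+1),
          (sumIcc3 (fun j => a j * q j ^ (k-m+1))).symm,
          Finset.mul_sum]
        refine Finset.sum_congr rfl fun j _ => ?_
        rw [neg_pow, pow_succ]
        ring
    _ = ∑ j ∈ Icc 1 3, (a j * q j) * ∑ k ∈ Finset.range (n+1),
          (χ (n+1) k * ((-(q j))^(k-m) * (k.choose m : ℂ))) := by
        rw [Finset.sum_comm]
        exact Finset.sum_congr rfl fun j _ => (Finset.mul_sum _ _ _).symm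
    _ = c 1 * ∑ k ∈ Finset.range n, χ n k * (if m = k+1 then (1:ℂ) else 0) := hco
    _ = c 1 * (if m = 0 then 0 else χ n (m - 1)) := by
        congr 1
        by_cases hm0 : m = 0
        · subst hm0
          rw [if_pos rfl]
          rw [Finset.sum_eq_zero]
          intro k _
          rw [if_neg (by omega), mul_zero]
        · rw [if_neg hm0]
          rw [Finset.sum_eq_single_of_mem (m-1) (by simp only [Finset.mem_range]; omega)
            (fun k _ hne => by rw [if_neg (by omega), mul_zero])]
          rw [if_pos (by omega), mul_one]
end
end
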